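/- Let V̄ be a finite dimensional vector space over a field of characteristic zero and N : V̄ → V̄ a nilpotent endomorphism with nilpotency index ν (i.e. N^ν ≠ 0 and N^{ν+1} = 0). Then the induced derivation Sym^k N on Sym^k V̄, defined by (Sym^k N)(x_1⋯x_k) = ∑_i x_1⋯(N x_i)⋯x_k, has nilpotency index exactly k·ν. -/

import Mathlib

open MvPolynomial

open Finset in
private lemma pow_apply_zero_of_le' {R M : Type*} [CommSemiring R] [AddCommMonoid M] [Module R M]
    (f : Module.End R M) {t : ℕ} {x : M} (hx : (f ^ t) x = 0) {m : ℕ} (hm : t ≤ m) :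
    (f ^ m) x = 0 := by
  obtain ⟨s, rfl⟩ := Nat.exists_eq_add_of_le hm
  rw [add_comm, pow_add, Module.End.mul_apply, hx, map_zero]

open Finset in
private lemma derivation_pow_leibniz' {R A : Type*} [CommRing R] [CommRing A] [Algebra R A]
    (D : Derivation R A A) (n : ℕ) (p q : A) :
    ((D.toLinearMap : Module.End R A) ^ n) (p * q) =
      ∑ i ∈ range (n + 1),
        n.choose i • (((D.toLinearMap : Module.End R A) ^ i) p *
          ((D.toLinearMap : Module.End R A) ^ (n - i)) q) := by
  set E : Module.End R A := D.toLinearMap with hE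
  induction n with
  | zero => simp
  | succ n ih =>
    have hse : ∀ m : ℕ, ∀ x : A, (E ^ (m + 1)) x = D ((E ^ m) x) := by
      intro m x
      rw [pow_succ', Module.End.mul_apply]
      rfl
    rw [hse, ih, map_sum]
    have step : ∀ i : ℕ,
        D (n.choose i • ((E ^ i) p * (E ^ (n - i)) q)) =
          n.choose i • ((E ^ (i + 1)) p * (E ^ (n - i)) q)
            + n.choose i • ((E ^ i) p * (E ^ (n - i + 1)) q) := by
      intro i
      rw [map_nsmul, Derivation.leibniz, hse, hse, smul_add]
      simp only [smul_eq_mul]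
      ring
    simp only [step, Finset.sum_add_distrib]
    conv_rhs => rw [Finset.sum_range_succ']
    have h1 : ∀ i ∈ range (n + 1),
        (n + 1).choose (i + 1) • ((E ^ (i + 1)) p * (E ^ (n + 1 - (i + 1))) q)
          = n.choose i • ((E ^ (i + 1)) p * (E ^ (n - i)) q)
            + n.choose (i + 1) • ((E ^ (i + 1)) p * (E ^ (n - i)) q) := by
      intro i hi
      have h : n + 1 - (i + 1) = n - i := by omega
      rw [h, Nat.choose_succ_succ, add_smul]
    rw [Finset.sum_congr rfl h1, Finset.sum_add_distrib]
    have h2 : ∑ i ∈ range (n + 1), n.choose i • ((E ^ i) p * (E ^ (n - i + 1)) q)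
        = (∑ i ∈ range (n + 1), n.choose (i + 1) • ((E ^ (i + 1)) p * (E ^ (n - i)) q))
          + (n + 1).choose 0 • ((E ^ (0 : ℕ)) p * (E ^ (n + 1 - 0)) q) := by
      rw [Finset.sum_range_succ' (fun i => n.choose i • ((E ^ i) p * (E ^ (n - i + 1)) q)),
        Finset.sum_range_succ]
      simp only [Nat.choose_succ_self, zero_smul, add_zero, Nat.choose_zero_right,
        Nat.sub_zero, Nat.choose_self]
      congr 1
      apply Finset.sum_congr rfl
      intro i hi
      have h : n - (i + 1) + 1 = n - i := by
        simp only [Finset.mem_range] at hi; omega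
      rw [h]
    rw [h2, add_assoc]


/-- Let `V` be a finite dimensional vector space over a field of characteristic zero (presented
via a basis `b : Basis ι F V` with `ι` finite) and `N : V → V` a nilpotent endomorphism of
nilpotency index `ν` (i.e. `N^ν ≠ 0` and `N^{ν+1} = 0`).  Model `Sym^k V` as the homogeneous
degree-`k` part of the symmetric algebra `Sym V = F[X_i : i ∈ ι]`, and let `D` be the unique
derivation of the symmetric algebra extending `N`, i.e. `D (X i) = ∑_j (N b_i)_j • X j`.
Then `D` has nilpotency index exactly `k·ν` on `Sym^k V`: `D^{kν}` is nonzero on some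
homogeneous polynomial of degree `k`, and `D^{kν+1}` kills all of them. -/
theorem sym_power_nilpotency_index
    {F : Type*} [Field F] [CharZero F] {ι : Type*} [Fintype ι] [DecidableEq ι]
    {V : Type*} [AddCommGroup V] [Module F V]
    (b : Module.Basis ι F V) (N : Module.End F V) (ν : ℕ)
    (hν : N ^ ν ≠ 0) (hν' : N ^ (ν + 1) = 0) (k : ℕ)
    (D : Derivation F (MvPolynomial ι F) (MvPolynomial ι F))
    (hD : ∀ i : ι, D (X i) = ∑ j : ι, b.repr (N (b i)) j • (X j : MvPolynomial ι F)) :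
    (∃ p : MvPolynomial ι F, p.IsHomogeneous k ∧
        ((D.toLinearMap : Module.End F (MvPolynomial ι F)) ^ (k * ν)) p ≠ 0) ∧
      (∀ p : MvPolynomial ι F, p.IsHomogeneous k →
        ((D.toLinearMap : Module.End F (MvPolynomial ι F)) ^ (k * ν + 1)) p = 0) := by
  set E : Module.End F (MvPolynomial ι F) := D.toLinearMap with hE
  set L : V →ₗ[F] MvPolynomial ι F :=
    (Finsupp.linearCombination F (X : ι → MvPolynomial ι F)) ∘ₗ
      (b.repr : V →ₗ[F] (ι →₀ F)) with hL
  have hLapp : ∀ v : V, L v = ∑ j : ι, b.repr v j • X j := by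
    intro v
    simp only [hL, LinearMap.comp_apply, LinearEquiv.coe_coe,
      Finsupp.linearCombination_apply]
    exact Finsupp.sum_fintype _ _ (fun j => zero_smul F _)
  have hLb : ∀ i : ι, L (b i) = X i := by
    intro i
    simp [hL, Finsupp.linearCombination_single]
  have hDL : ∀ v : V, D (L v) = L (N v) := by
    intro v
    have h1 : N v = ∑ j : ι, b.repr v j • N (b j) := by
      conv_lhs => rw [← b.sum_repr v]
      rw [map_sum]
      simp only [map_smul]
    rw [hLapp v, map_sum, h1, map_sum]
    refine Finset.sum_congr rfl fun j _ => ?_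
    rw [Derivation.map_smul, map_smul, hD j, hLapp (N (b j))]
  have hpowL : ∀ (m : ℕ) (v : V), (E ^ m) (L v) = L ((N ^ m) v) := by
    intro m
    induction m with
    | zero => intro v; simp
    | succ m ih =>
      intro v
      have : (E ^ (m + 1)) (L v) = D ((E ^ m) (L v)) := by
        rw [pow_succ', Module.End.mul_apply]; rfl
      rw [this, ih, hDL, pow_succ', Module.End.mul_apply]
  have hNzero : ∀ m : ℕ, ν + 1 ≤ m → (N ^ m : Module.End F V) = 0 := by
    intro m hm
    obtain ⟨s, rfl⟩ := Nat.exists_eq_add_of_le hm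
    rw [pow_add, hν', zero_mul]
  -- the degree of a Finsupp is additive
  have hdeg_add : ∀ a c : ι →₀ ℕ, (a + c).degree = a.degree + c.degree := by
    intro a c
    simp [Finsupp.degree_eq_weight_one, map_add]
  have hdeg_single : ∀ i : ι, (Finsupp.single i 1 : ι →₀ ℕ).degree = 1 := by
    intro i
    rw [Finsupp.degree_apply, Finsupp.support_single_ne_zero _ one_ne_zero,
      Finset.sum_singleton, Finsupp.single_eq_same]
  -- upper bound
  have upper : ∀ (m : ℕ) (p : MvPolynomial ι F),
      p.IsHomogeneous m → (E ^ (m * ν + 1)) p = 0 := by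
    intro m
    induction m with
    | zero =>
      intro p hp
      rw [p.as_sum, map_sum]
      apply Finset.sum_eq_zero
      intro s hs
      have hsd : s.degree = 0 := by
        by_contra h
        exact (mem_support_iff.mp hs) (hp.coeff_eq_zero h)
      have hs0 : s = 0 := (Finsupp.degree_eq_zero_iff s).mp hsd
      rw [hs0, zero_mul, zero_add, pow_one]
      show D (monomial 0 (coeff 0 p)) = 0
      rw [monomial_zero', ← MvPolynomial.algebraMap_eq]
      exact D.map_algebraMap _
    | succ m ih =>
      intro p hp
      rw [p.as_sum, map_sum]
      apply Finset.sum_eq_zero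
      intro s hs
      have hsd : s.degree = m + 1 := by
        by_contra h
        exact (mem_support_iff.mp hs) (hp.coeff_eq_zero h)
      have hs0 : s ≠ 0 := by
        intro h
        rw [h, map_zero] at hsd
        omega
      obtain ⟨i, hi⟩ : ∃ i, s i ≠ 0 := by
        by_contra h
        push_neg at h
        exact hs0 (Finsupp.ext h)
      set t : ι →₀ ℕ := s - Finsupp.single i 1 with ht
      have hst : Finsupp.single i 1 + t = s := by
        rw [ht, add_tsub_cancel_of_le]
        rw [Finsupp.single_le_iff]
        omega
      have htd : t.degree = m := by
        have := hdeg_add (Finsupp.single i 1) t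
        rw [hst, hdeg_single, hsd] at this
        omega
      have hmono : monomial s (coeff s p) = X i * monomial t (coeff s p) := by
        rw [← hst, monomial_single_add, pow_one]
      rw [hmono, hE, derivation_pow_leibniz']
      apply Finset.sum_eq_zero
      intro j hj
      rcases le_or_gt j ν with hjν | hjν
      · have hq : (E ^ (m * ν + 1)) (monomial t (coeff s p)) = 0 :=
          ih _ (isHomogeneous_monomial _ htd)
        have hle : m * ν + 1 ≤ (m + 1) * ν + 1 - j := by
          have hmul : (m + 1) * ν = m * ν + ν := by ring
          omega
        rw [pow_apply_zero_of_le' E hq hle, mul_zero, smul_zero]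
      · have hx : (E ^ j) (X i) = 0 := by
          rw [← hLb i, hpowL, hNzero j (by omega), LinearMap.zero_apply, map_zero]
        rw [hx, zero_mul, smul_zero]
  -- lower bound
  obtain ⟨v, hv⟩ : ∃ v : V, (N ^ ν) v ≠ 0 := by
    by_contra h
    push_neg at h
    exact hν (LinearMap.ext fun v => h v)
  set w : V := (N ^ ν) v with hw
  have hLne : ∀ u : V, u ≠ 0 → L u ≠ 0 := by
    intro u hu h0
    apply hu
    rw [hLapp] at h0
    have hrepr : ∀ j : ι, b.repr u j = 0 := by
      intro j
      have := congrArg (coeff (Finsupp.single j 1)) h0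
      rw [coeff_sum, coeff_zero] at this
      simpa [coeff_smul, coeff_X', Finsupp.single_left_inj (one_ne_zero (α := ℕ))]
        using this
    have : b.repr u = 0 := Finsupp.ext hrepr
    simpa using congrArg b.repr.symm this
  have homL : ∀ u : V, (L u).IsHomogeneous 1 := by
    intro u
    rw [hLapp]
    apply MvPolynomial.IsHomogeneous.sum
    intro j _
    exact (homogeneousSubmodule ι F 1).smul_mem _ (isHomogeneous_X F j)
  have homLk : ∀ (u : V) (m : ℕ), ((L u) ^ m).IsHomogeneous m := by
    intro u m
    simpa using (homL u).pow m
  have key : ∀ m : ℕ, ∃ c : ℕ, 0 < c ∧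
      (E ^ (m * ν)) ((L v) ^ m) = c • (L w) ^ m := by
    intro m
    induction m with
    | zero => exact ⟨1, one_pos, by simp⟩
    | succ m ih =>
      obtain ⟨c, hc, hEq⟩ := ih
      refine ⟨((m + 1) * ν).choose ν * c, Nat.mul_pos (Nat.choose_pos
        (by nlinarith)) hc, ?_⟩
      have hmul : (m + 1) * ν = m * ν + ν := by ring
      rw [pow_succ' (L v), hE, derivation_pow_leibniz']
      rw [Finset.sum_eq_single_of_mem ν (Finset.mem_range.mpr (by omega))]
      · have hν1 : ((E : Module.End F (MvPolynomial ι F)) ^ ν) (L v) = L w := by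
          rw [hpowL]
        have hsub : (m + 1) * ν - ν = m * ν := by omega
        rw [hν1, hsub, hEq, mul_smul_comm, smul_smul, pow_succ' (L w)]
      · intro j hj hjν
        rcases lt_or_gt_of_ne hjν with hlt | hgt
        · have hq : (E ^ (m * ν + 1)) ((L v) ^ m) = 0 := upper m _ (homLk v m)
          have hle : m * ν + 1 ≤ (m + 1) * ν - j := by omega
          rw [pow_apply_zero_of_le' E hq hle, mul_zero, smul_zero]
        · have hx : (E ^ j) (L v) = 0 := by
            rw [hpowL, hNzero j (by omega), LinearMap.zero_apply, map_zero]
          rw [hx, zero_mul, smul_zero]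
  constructor
  · obtain ⟨c, hc, hEq⟩ := key k
    refine ⟨(L v) ^ k, homLk v k, ?_⟩
    rw [hEq]
    have hwz : L w ≠ 0 := hLne w hv
    have hpow : (L w) ^ k ≠ 0 := pow_ne_zero k hwz
    intro h
    apply hpow
    have hcF : (c : MvPolynomial ι F) ≠ 0 := Nat.cast_ne_zero.mpr hc.ne'
    rw [nsmul_eq_mul] at h
    exact (mul_eq_zero.mp h).resolve_left hcF
  · exact upper k
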